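/- Let A, B be n×n positive definite matrices, let X = A^{-1} # B, and let a, b ≥ 0. Then a²A + b²B + ab((AB)^{1/2} + (BA)^{1/2}) = (aI + bX) A (aI + bX). -/

import Mathlib

open Matrix ComplexOrder

/-- The square root of a positive semidefinite matrix, as defined in Mathlib (Dec 2024);
removed from current Mathlib, restated here with its old definition. -/
noncomputable def _root_.Matrix.PosSemidef.sqrt {m : Type*} [Fintype m] [DecidableEq m]
    {𝕜 : Type*} [RCLike 𝕜] {A : Matrix m m 𝕜} (hA : A.PosSemidef) : Matrix m m 𝕜 :=
  hA.1.eigenvectorUnitary.1 * diagonal ((↑) ∘ (√·) ∘ hA.1.eigenvalues) *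
  (star hA.1.eigenvectorUnitary : Matrix m m 𝕜)

lemma _root_.Matrix.PosSemidef.posSemidef_sqrt {m : Type*} [Fintype m] [DecidableEq m]
    {𝕜 : Type*} [RCLike 𝕜] {A : Matrix m m 𝕜} (hA : A.PosSemidef) : hA.sqrt.PosSemidef := by
  apply PosSemidef.mul_mul_conjTranspose_same
  refine posSemidef_diagonal_iff.mpr fun i ↦ ?_
  rw [Function.comp_apply, RCLike.nonneg_iff]
  constructor
  · simp only [RCLike.ofReal_re]; exact Real.sqrt_nonneg _
  · simp only [RCLike.ofReal_im]

lemma _root_.Matrix.PosSemidef.sqrt_mul_self {m : Type*} [Fintype m] [DecidableEq m]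
    {𝕜 : Type*} [RCLike 𝕜] {A : Matrix m m 𝕜} (hA : A.PosSemidef) : hA.sqrt * hA.sqrt = A := by
  have hU : (star hA.1.eigenvectorUnitary : Matrix m m 𝕜) * hA.1.eigenvectorUnitary.1 = 1 :=
    Unitary.coe_star_mul_self _
  have hD : diagonal (((↑) ∘ (√·) ∘ hA.1.eigenvalues) : m → 𝕜) *
      diagonal ((↑) ∘ (√·) ∘ hA.1.eigenvalues) = diagonal (RCLike.ofReal ∘ hA.1.eigenvalues) := by
    rw [diagonal_mul_diagonal]
    congr 1
    funext i
    simp only [Function.comp_apply]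
    rw [← RCLike.ofReal_mul, Real.mul_self_sqrt (hA.eigenvalues_nonneg i)]
  conv_rhs => rw [hA.1.spectral_theorem, Unitary.conjStarAlgAut_apply]
  unfold Matrix.PosSemidef.sqrt
  calc _ = hA.1.eigenvectorUnitary.1 * diagonal ((↑) ∘ (√·) ∘ hA.1.eigenvalues) *
        ((star hA.1.eigenvectorUnitary : Matrix m m 𝕜) * hA.1.eigenvectorUnitary.1) *
        diagonal ((↑) ∘ (√·) ∘ hA.1.eigenvalues) * (star hA.1.eigenvectorUnitary : Matrix m m 𝕜) := by
          simp only [Matrix.mul_assoc]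
    _ = _ := by rw [hU, Matrix.mul_one, Matrix.mul_assoc _ (diagonal _) (diagonal _), hD]

namespace Heron

variable {n : ℕ}

def WeakMaj {n : ℕ} (x y : Fin n → ℝ) : Prop :=
  ∀ s : Finset (Fin n), ∃ t : Finset (Fin n),
    t.card = s.card ∧ ∑ i ∈ s, x i ≤ ∑ i ∈ t, y i

def Maj {n : ℕ} (x y : Fin n → ℝ) : Prop :=
  WeakMaj x y ∧ ∑ i, x i = ∑ i, y i

lemma sandwich_posSemidef {S T : Matrix (Fin n) (Fin n) ℂ} (hS : S.IsHermitian)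
    (hT : T.PosSemidef) : (S * T * S).PosSemidef := by
  have h := hT.mul_mul_conjTranspose_same S
  rwa [hS.eq] at h

noncomputable def geomMean {A B : Matrix (Fin n) (Fin n) ℂ}
    (hA : A.PosDef) (hB : B.PosDef) : Matrix (Fin n) (Fin n) ℂ :=
  hA.posSemidef.sqrt *
    (sandwich_posSemidef hA.posSemidef.posSemidef_sqrt.isHermitian.inv
        hB.posSemidef).sqrt *
    hA.posSemidef.sqrt

lemma geomMean_posSemidef {A B : Matrix (Fin n) (Fin n) ℂ}
    (hA : A.PosDef) (hB : B.PosDef) : (geomMean hA hB).PosSemidef :=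
  sandwich_posSemidef hA.posSemidef.posSemidef_sqrt.isHermitian
    (Matrix.PosSemidef.posSemidef_sqrt _)

noncomputable def specMean {A B : Matrix (Fin n) (Fin n) ℂ}
    (hA : A.PosDef) (hB : B.PosDef) : Matrix (Fin n) (Fin n) ℂ :=
  (geomMean_posSemidef hA.inv hB).sqrt * A * (geomMean_posSemidef hA.inv hB).sqrt

def HasPosSpectrum (M : Matrix (Fin n) (Fin n) ℂ) : Prop :=
  ∀ z ∈ spectrum ℂ M, 0 < z.re ∧ z.im = 0

def IsPrincipalSqrt (M S : Matrix (Fin n) (Fin n) ℂ) : Prop :=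
  S * S = M ∧ HasPosSpectrum S

noncomputable def absMat (Y : Matrix (Fin n) (Fin n) ℂ) : Matrix (Fin n) (Fin n) ℂ :=
  (Matrix.posSemidef_conjTranspose_mul_self Y).sqrt

noncomputable def posPart (H : Matrix (Fin n) (Fin n) ℂ) : Matrix (Fin n) (Fin n) ℂ :=
  ((1 : ℂ) / 2) • (absMat H + H)

open Polynomial in
lemma charpoly_eval_eq (M : Matrix (Fin n) (Fin n) ℂ) (μ : ℂ) :
    M.charpoly.eval μ = (μ • (1 : Matrix (Fin n) (Fin n) ℂ) - M).det := by
  rw [Matrix.charpoly, eval_det, Matrix.matPolyEquiv_charmatrix]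
  congr 1
  simp [Matrix.scalar, Matrix.smul_one_eq_diagonal]

open Polynomial in
lemma mem_spectrum_of_isRoot_charpoly {M : Matrix (Fin n) (Fin n) ℂ} {μ : ℂ}
    (h : M.charpoly.IsRoot μ) : μ ∈ spectrum ℂ M := by
  rw [spectrum.mem_iff]
  intro hu
  have hdet := (Matrix.isUnit_iff_isUnit_det _).mp hu
  rw [Polynomial.IsRoot.def, charpoly_eval_eq] at h
  rw [Algebra.algebraMap_eq_smul_one] at hdet
  rw [h] at hdet
  exact hdet.ne_zero rfl

lemma aeval_mul_comm {S R Y : Matrix (Fin n) (Fin n) ℂ} (h : S * Y = Y * R)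
    (p : Polynomial ℂ) :
    (Polynomial.aeval S p) * Y = Y * (Polynomial.aeval R p) := by
  have hpow : ∀ k : ℕ, S ^ k * Y = Y * R ^ k := by
    intro k
    induction k with
    | zero => simp
    | succ k ih => rw [pow_succ, pow_succ, mul_assoc, h, ← mul_assoc, ih, mul_assoc]
  induction p using Polynomial.induction_on' with
  | add p q hp hq => simp [map_add, add_mul, mul_add, hp, hq]
  | monomial k c =>
      simp only [Polynomial.aeval_monomial, Algebra.algebraMap_eq_smul_one,
        smul_mul_assoc, one_mul, mul_smul_comm]
      rw [hpow k]

open Polynomial in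
lemma aeval_neg_prod_isUnit {R : Matrix (Fin n) (Fin n) ℂ} (hR : HasPosSpectrum R)
    (s : Multiset ℂ) (hs : ∀ μ ∈ s, 0 < μ.re) :
    IsUnit (Polynomial.aeval (-R) ((s.map fun a => X - C a).prod)) := by
  induction s using Multiset.induction with
  | empty => simp
  | cons a t ih =>
      rw [Multiset.map_cons, Multiset.prod_cons, _root_.map_mul]
      refine IsUnit.mul ?_ (ih fun μ hμ => hs μ (Multiset.mem_cons_of_mem hμ))
      have ha : 0 < a.re := hs a (Multiset.mem_cons_self a t)
      have heq : Polynomial.aeval (-R) (X - C a) = -((a : ℂ) • 1 - -R) := by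
        simp [Algebra.algebraMap_eq_smul_one, sub_eq_add_neg]
      rw [heq, IsUnit.neg_iff]
      by_contra hnu
      have hmem : a ∈ spectrum ℂ (-R) := by
        rw [spectrum.mem_iff, Algebra.algebraMap_eq_smul_one]
        exact hnu
      have hmem' : -a ∈ spectrum ℂ R := by
        rw [← spectrum.neg_eq] at hmem
        simpa using hmem
      have := (hR (-a) hmem').1
      simp only [Complex.neg_re] at this
      linarith

open Polynomial in
lemma principal_sqrt_unique {M S R : Matrix (Fin n) (Fin n) ℂ}
    (hS : IsPrincipalSqrt M S) (hR2 : R * R = M) (hRspec : HasPosSpectrum R) :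
    S = R := by
  have hsq : S * S = R * R := hS.1.trans hR2.symm
  have key : S * (S - R) = (S - R) * (-R) := by
    rw [mul_sub, sub_mul, mul_neg, mul_neg, hsq]
    noncomm_ring
  have hcomm := aeval_mul_comm key S.charpoly
  rw [Matrix.aeval_self_charpoly, zero_mul] at hcomm
  have hmonic : S.charpoly.Monic := Matrix.charpoly_monic S
  have hsplit : S.charpoly = (S.charpoly.roots.map fun a => X - C a).prod :=
    (IsAlgClosed.splits _).eq_prod_roots_of_monic hmonic
  have hroots : ∀ μ ∈ S.charpoly.roots, 0 < μ.re := fun μ hμ =>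
    (hS.2 μ (mem_spectrum_of_isRoot_charpoly (isRoot_of_mem_roots hμ))).1
  have hunit := aeval_neg_prod_isUnit hRspec S.charpoly.roots hroots
  rw [← hsplit] at hunit
  obtain ⟨u, hu⟩ := hunit
  have : (S - R) * (u : Matrix (Fin n) (Fin n) ℂ) = 0 := by rw [hu, ← hcomm]
  have hzero : S - R = 0 := by
    calc S - R = (S - R) * u * ↑u⁻¹ := by
          rw [mul_assoc, ← Units.val_mul, mul_inv_cancel, Units.val_one, mul_one]
      _ = 0 := by rw [this, zero_mul]

  exact sub_eq_zero.mp hzero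

lemma posDef_hasPosSpectrum {M : Matrix (Fin n) (Fin n) ℂ} (hM : M.PosDef) :
    HasPosSpectrum M := by
  intro z hz
  have hspec : spectrum ℂ M =
      Set.range (fun i => (hM.isHermitian.eigenvalues i : ℂ)) := by
    conv_lhs => rw [hM.isHermitian.spectral_theorem,
      Unitary.conjStarAlgAut_apply, Unitary.spectrum_star_right_conjugate, _root_.spectrum_diagonal]
    ext w
    simp [Function.comp]
  rw [hspec] at hz
  obtain ⟨i, hi⟩ := hz
  have hpos := hM.eigenvalues_pos i
  constructor
  · rw [← hi]; simpa using hpos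
  · rw [← hi]; simp

lemma posDef_conj_same {P M : Matrix (Fin n) (Fin n) ℂ} (hP : P.IsHermitian)
    (hPu : IsUnit P) (hM : M.PosDef) : (P * M * P).PosDef := by
  constructor
  · have : (P * M * P).conjTranspose = Pᴴ * Mᴴ * Pᴴ := by
      rw [Matrix.conjTranspose_mul, Matrix.conjTranspose_mul, mul_assoc]
    rw [Matrix.IsHermitian, this, hP.eq, hM.isHermitian.eq]
  · have h := hM.conjTranspose_mul_mul_same (B := P)
      ((Matrix.mulVec_injective_iff_isUnit).mpr hPu)
    rw [hP.eq] at h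
    exact h.2

lemma hasPosSpectrum_conj_unit {M : Matrix (Fin n) (Fin n) ℂ}
    (u : (Matrix (Fin n) (Fin n) ℂ)ˣ) (hM : HasPosSpectrum M) :
    HasPosSpectrum ((u : Matrix (Fin n) (Fin n) ℂ) * M * ((u⁻¹ : _) : Matrix (Fin n) (Fin n) ℂ)) := by
  intro z hz
  rw [spectrum.units_conjugate] at hz
  exact hM z hz

/-- the Riccati form of the weighted Bures–Wasserstein expression:
`a²A + b²B + ab((AB)^{1/2} + (BA)^{1/2}) = (aI + bX) A (aI + bX)` where `X` is
the unique positive definite solution of `XAX = B`. -/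
theorem wasserstein_riccati_form {n : ℕ} (A B X S T : Matrix (Fin n) (Fin n) ℂ)
    (hA : A.PosDef) (hB : B.PosDef) (hX : X.PosDef) (hRic : X * A * X = B)
    (a b : ℝ) (ha : 0 ≤ a) (hb : 0 ≤ b)
    (hS : IsPrincipalSqrt (A * B) S) (hT : IsPrincipalSqrt (B * A) T) :
    ((a : ℂ) ^ 2) • A + ((b : ℂ) ^ 2) • B + ((a : ℂ) * b) • (S + T)
      = ((a : ℂ) • 1 + (b : ℂ) • X) * A * ((a : ℂ) • 1 + (b : ℂ) • X) := by
  -- the square root of X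
  set Q := hX.posSemidef.sqrt with hQdef
  have hQQ : Q * Q = X := hX.posSemidef.sqrt_mul_self
  have hQh : Q.IsHermitian := hX.posSemidef.posSemidef_sqrt.isHermitian
  have hQu : IsUnit Q := by
    rw [Matrix.isUnit_iff_isUnit_det]
    refine isUnit_iff_ne_zero.mpr fun h0 => hX.det_pos.ne' ?_
    rw [← hQQ, Matrix.det_mul, h0, mul_zero]
  set uQ : (Matrix (Fin n) (Fin n) ℂ)ˣ := hQu.unit with huQdef
  have huQ : (uQ : Matrix (Fin n) (Fin n) ℂ) = Q := hQu.unit_spec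
  have huQinv : ((uQ⁻¹ : _) : Matrix (Fin n) (Fin n) ℂ) * Q = 1 := by
    rw [← huQ]; exact uQ.inv_mul
  have hQinvu : Q * ((uQ⁻¹ : _) : Matrix (Fin n) (Fin n) ℂ) = 1 := by
    rw [← huQ]; exact uQ.mul_inv
  have hQAQ : (Q * A * Q).PosDef := posDef_conj_same hQh hQu hA
  have hQAQspec : HasPosSpectrum (Q * A * Q) := posDef_hasPosSpectrum hQAQ
  -- A * X and X * A are conjugates of Q * A * Q
  have hAX : A * X = ((uQ⁻¹ : _) : Matrix (Fin n) (Fin n) ℂ) * (Q * A * Q) * uQ := by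
    rw [huQ, ← hQQ]
    calc A * (Q * Q) = ((((uQ⁻¹ : _) : Matrix (Fin n) (Fin n) ℂ) * Q) * A) * (Q * Q) := by
          rw [huQinv, one_mul]
      _ = ((uQ⁻¹ : _) : Matrix (Fin n) (Fin n) ℂ) * (Q * A * Q) * Q := by
          noncomm_ring
  have hXA : X * A = (uQ : Matrix (Fin n) (Fin n) ℂ) * (Q * A * Q) * ((uQ⁻¹ : _) : Matrix (Fin n) (Fin n) ℂ) := by
    rw [huQ, ← hQQ]
    calc (Q * Q) * A = (Q * Q) * (A * (Q * ((uQ⁻¹ : _) : Matrix (Fin n) (Fin n) ℂ))) := by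
          rw [hQinvu, mul_one]
      _ = Q * (Q * A * Q) * ((uQ⁻¹ : _) : Matrix (Fin n) (Fin n) ℂ) := by
          noncomm_ring
  have hAXspec : HasPosSpectrum (A * X) := by
    intro z hz
    rw [hAX, spectrum.units_conjugate'] at hz
    exact hQAQspec z hz
  have hXAspec : HasPosSpectrum (X * A) := by
    intro z hz
    rw [hXA, spectrum.units_conjugate] at hz
    exact hQAQspec z hz
  -- identify S and T
  have hSeq : S = A * X :=
    principal_sqrt_unique hS (by rw [mul_assoc, ← mul_assoc X A X, hRic]) hAXspec
  have hTeq : T = X * A :=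
    principal_sqrt_unique hT (by rw [mul_assoc, ← mul_assoc A X A, ← mul_assoc X (A * X) A,
      ← mul_assoc X A X, hRic]) hXAspec
  rw [hSeq, hTeq, ← hRic]
  simp only [add_mul, mul_add, smul_mul_assoc, mul_smul_comm, one_mul, mul_one,
    smul_smul, smul_add, mul_assoc]
  module

end Heron
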